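/- Every fluid model (y, x) satisfies (y(t), x(t)) → (0, 0) as t → ∞ and sup_{t ≥ 0} ‖(y(t), x(t))‖ < ∞, and this holds uniformly over initial states from compact sets: for every compact set K ⊆ {(y₀, x₀) ∈ ℝ² : x₀ ≥ -λ/β} there exists M < ∞ such that every fluid model with (y(0), x(0)) ∈ K satisfies ‖(y(t), x(t))‖ ≤ M for all t ≥ 0, and for every δ > 0 there exists T < ∞ such that every fluid model with (y(0), x(0)) ∈ K satisfies ‖(y(t), x(t))‖ ≤ δ for all t ≥ T. -/

import Mathlib

open MeasureTheory Set Filter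
open Topology

/-- A fluid model: locally Lipschitz pair `(y, x)` on `[0,∞)` with `x ≥ -λ/β`,
satisfying the fluid ODE a.e. on `[0,∞)`. -/
def IsFluidModel (β γ ε lam : ℝ) (y x : ℝ → ℝ) : Prop :=
  (∀ T : ℝ, 0 < T → ∃ K : NNReal,
      LipschitzOnWith K y (Set.Icc 0 T) ∧ LipschitzOnWith K x (Set.Icc 0 T)) ∧
  (∀ t : ℝ, 0 ≤ t → -lam / β ≤ x t) ∧
  (∀ᵐ t ∂(volume.restrict (Set.Ici (0 : ℝ))),
    ∃ y' x' : ℝ, HasDerivAt y y' t ∧ HasDerivAt x x' t ∧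
      (-lam / β < x t → y' = β * x t ∧ x' = -(γ * β * x t) - ε * y t) ∧
      (x t = -lam / β → y' = -lam ∧ x' = max (γ * lam - ε * y t) 0))

lemma aux_ae_deriv_le (f : ℝ → ℝ) (a b K C : ℝ) (hab : a ≤ b) (hK : 0 ≤ K)
    (hlip : ∀ u ∈ Icc a b, ∀ v ∈ Icc a b, |f v - f u| ≤ K * |v - u|)
    (hae : ∀ᵐ u ∂(volume.restrict (Icc a b)), ∃ f', HasDerivAt f f' u ∧ f' ≤ C) :
    f b - f a ≤ C * (b - a) := by
  have habs : 0 ≤ C + |C| := by linarith [neg_abs_le C]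
  -- continuity of f on [a,b]
  have hfc : ContinuousOn f (Icc a b) := by
    have hlipOn : LipschitzOnWith K.toNNReal f (Icc a b) := by
      rw [lipschitzOnWith_iff_dist_le_mul]
      intro u hu v hv
      rw [Real.dist_eq, Real.dist_eq, Real.coe_toNNReal K hK]
      exact hlip v hv u hu
    exact hlipOn.continuousOn
  -- the exceptional null set
  have hnull : volume {u | u ∈ Icc a b ∧ ¬ ∃ f', HasDerivAt f f' u ∧ f' ≤ C} = 0 := by
    have h1 : ∀ᵐ u ∂(volume : Measure ℝ), u ∈ Icc a b → ∃ f', HasDerivAt f f' u ∧ f' ≤ C :=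
      (ae_restrict_iff' measurableSet_Icc).1 hae
    rw [ae_iff] at h1
    refine measure_mono_null (fun u hu => ?_) h1
    simp only [mem_setOf_eq] at *
    exact fun himp => hu.2 (himp hu.1)
  -- main estimate with error η
  suffices h : ∀ η : ℝ, 0 < η →
      f b - f a ≤ C * (b - a) + η * (b - a) + (K + |C| + 1) * η by
    by_contra hcon
    push_neg at hcon
    have hGpos : 0 < f b - f a - C * (b - a) := by linarith
    set G := f b - f a - C * (b - a) with hG
    set D := (b - a) + (K + |C| + 1) with hD
    have hDpos : 0 < D := by rw [hD]; linarith [abs_nonneg C]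
    have hη : 0 < G / (2 * D) := div_pos hGpos (by linarith)
    have h2 := h (G / (2 * D)) hη
    have h3 : G / (2 * D) * (b - a) + (K + |C| + 1) * (G / (2 * D)) = G / 2 := by
      field_simp
      ring
    linarith
  intro η hη
  -- open superset of the null set of small measure
  obtain ⟨U, hNU, hUopen, hUvol⟩ :=
    Set.exists_isOpen_lt_of_lt _ _
      (show volume {u | u ∈ Icc a b ∧ ¬ ∃ f', HasDerivAt f f' u ∧ f' ≤ C}
          < ENNReal.ofReal η by rw [hnull]; exact ENNReal.ofReal_pos.2 hη)
  have hUfin : volume U ≠ ⊤ := (hUvol.trans ENNReal.ofReal_lt_top).ne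
  set φ : ℝ → ℝ := fun t => (volume (U ∩ Icc a t)).toReal with hφ
  have hfin : ∀ t, volume (U ∩ Icc a t) ≠ ⊤ :=
    fun t => ne_top_of_le_ne_top hUfin (measure_mono inter_subset_left)
  have hφmono : ∀ s t : ℝ, s ≤ t → φ s ≤ φ t := fun s t h =>
    ENNReal.toReal_mono (hfin t)
      (measure_mono (inter_subset_inter_right _ (Icc_subset_Icc le_rfl h)))
  have hφlip : ∀ s t : ℝ, s ≤ t → φ t ≤ φ s + (t - s) := by
    intro s t hst
    have hsub : U ∩ Icc a t ⊆ (U ∩ Icc a s) ∪ Ioc s t := by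
      rintro w ⟨hwU, hwa, hwt⟩
      rcases le_or_gt w s with h | h
      · exact Or.inl ⟨hwU, hwa, h⟩
      · exact Or.inr ⟨h, hwt⟩
    have h1 : volume (U ∩ Icc a t) ≤ volume (U ∩ Icc a s) + volume (Ioc s t) :=
      le_trans (measure_mono hsub) (measure_union_le _ _)
    have hIoc : volume (Ioc s t) ≠ ⊤ := by
      rw [Real.volume_Ioc]; exact ENNReal.ofReal_ne_top
    have h2 := ENNReal.toReal_mono (ENNReal.add_ne_top.2 ⟨hfin s, hIoc⟩) h1
    rw [ENNReal.toReal_add (hfin s) hIoc, Real.volume_Ioc,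
      ENNReal.toReal_ofReal (by linarith)] at h2
    exact h2
  have hφ0 : φ a = 0 := by
    have : volume (U ∩ Icc a a) = 0 := by
      rw [Icc_self]
      exact measure_mono_null inter_subset_right Real.volume_singleton
    simp only [hφ]
    rw [this]; simp
  have hφη : ∀ t, φ t ≤ η := by
    intro t
    have h2 : volume (U ∩ Icc a t) ≤ ENNReal.ofReal η :=
      le_trans (measure_mono inter_subset_left) hUvol.le
    calc φ t ≤ (ENNReal.ofReal η).toReal := ENNReal.toReal_mono ENNReal.ofReal_ne_top h2
      _ = η := ENNReal.toReal_ofReal hη.le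
  have hφcont : Continuous φ := by
    have key : ∀ s t : ℝ, s ≤ t → |φ t - φ s| ≤ |t - s| := by
      intro s t h
      rw [abs_of_nonneg (by linarith [hφmono s t h]), abs_of_nonneg (by linarith)]
      linarith [hφlip s t h]
    refine LipschitzWith.continuous (K := 1) (LipschitzWith.of_dist_le_mul fun s t => ?_)
    rw [Real.dist_eq, Real.dist_eq, NNReal.coe_one, one_mul]
    rcases le_total s t with h | h
    · rw [abs_sub_comm (φ s) (φ t), abs_sub_comm s t]; exact key s t h
    · exact key t s h
  set S : Set ℝ :=
    {t | t ∈ Icc a b ∧ f t - f a ≤ (C + η) * (t - a) + (K + |C| + 1) * φ t} with hS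
  have hSclosed : IsClosed (S ∩ Icc a b) := by
    have heq : S ∩ Icc a b = Icc a b ∩
        (fun t => f t - f a - (C + η) * (t - a) - (K + |C| + 1) * φ t) ⁻¹' (Iic 0) := by
      ext t
      simp only [hS, mem_inter_iff, mem_setOf_eq, mem_preimage, mem_Iic]
      constructor
      · rintro ⟨⟨h1, h2⟩, h3⟩; exact ⟨h3, by linarith⟩
      · rintro ⟨h1, h2⟩; exact ⟨⟨h1, by linarith⟩, h1⟩
    rw [heq]
    refine ContinuousOn.preimage_isClosed_of_isClosed ?_ isClosed_Icc isClosed_Iic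
    exact ((hfc.sub continuousOn_const).sub
      ((continuous_const.mul (continuous_id.sub continuous_const)).continuousOn)).sub
      ((continuous_const.mul hφcont).continuousOn)
  have haS : a ∈ S := by
    refine ⟨left_mem_Icc.2 hab, ?_⟩
    rw [hφ0]
    simp
  have hgt : ∀ t ∈ S ∩ Ico a b, ∀ z ∈ Ioi t, (S ∩ Ioc t z).Nonempty := by
    rintro t ⟨⟨htab, hineq⟩, hta, htb⟩ z hz
    have hev : ∀ᶠ v in 𝓝[>] t, v ∈ S := by
      by_cases hgood : ∃ f', HasDerivAt f f' t ∧ f' ≤ C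
      · obtain ⟨f', hf'd, hf'C⟩ := hgood
        have hslope : Tendsto (slope f t) (𝓝[≠] t) (𝓝 f') :=
          hasDerivAt_iff_tendsto_slope.1 hf'd
        have hev0 : ∀ᶠ v in 𝓝[≠] t, slope f t v < C + η :=
          hslope.eventually (Iio_mem_nhds (by linarith : f' < C + η))
        have hev1 : ∀ᶠ v in 𝓝[>] t, slope f t v < C + η :=
          hev0.filter_mono (nhdsWithin_mono t (fun w hw => ne_of_gt hw))
        have hev2 : ∀ᶠ v in 𝓝[>] t, v ∈ Ioc t b := Ioc_mem_nhdsGT_of_mem ⟨le_rfl, htb⟩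
        filter_upwards [hev1, hev2, self_mem_nhdsWithin] with v hv1 hv2 hv3
        have hvt : t < v := hv3
        have hslope_le : f v - f t ≤ (C + η) * (v - t) := by
          rw [slope_def_field] at hv1
          rw [div_lt_iff₀ (by linarith : (0:ℝ) < v - t)] at hv1
          linarith
        refine ⟨⟨le_trans hta hvt.le, hv2.2⟩, ?_⟩
        have hm := hφmono t v hvt.le
        have hKpos : (0:ℝ) ≤ K + |C| + 1 := by linarith [abs_nonneg C]
        nlinarith [hineq, hslope_le, mul_le_mul_of_nonneg_left hm hKpos]
      · have htN : t ∈ U := hNU ⟨htab, hgood⟩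
        obtain ⟨ρ, hρ, hball⟩ := Metric.isOpen_iff.1 hUopen t htN
        have hev2 : Ioo t (t + ρ) ∈ 𝓝[>] t := Ioo_mem_nhdsGT_of_mem ⟨le_rfl, by linarith⟩
        have hev3 : Ioc t b ∈ 𝓝[>] t := Ioc_mem_nhdsGT_of_mem ⟨le_rfl, htb⟩
        filter_upwards [hev2, hev3] with v hv2 hv3
        have hvt : t < v := hv2.1
        have hvI : Ioc t v ⊆ U := by
          rintro w ⟨htw, hwv⟩
          apply hball
          rw [Metric.mem_ball, Real.dist_eq, abs_of_pos (by linarith : (0:ℝ) < w - t)]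
          have := hv2.2
          linarith
        have hφv : φ t + (v - t) ≤ φ v := by
          have hdisj : Disjoint (U ∩ Icc a t) (Ioc t v) := by
            rw [Set.disjoint_left]
            rintro w ⟨_, _, hwt⟩ ⟨htw, _⟩
            linarith
          have hsub : (U ∩ Icc a t) ∪ Ioc t v ⊆ U ∩ Icc a v := by
            rintro w (⟨hwU, hwa, hwt⟩ | ⟨htw, hwv⟩)
            · exact ⟨hwU, hwa, hwt.trans hvt.le⟩
            · exact ⟨hvI ⟨htw, hwv⟩, le_trans hta htw.le, hwv⟩
          have h1 : volume (U ∩ Icc a t) + volume (Ioc t v) ≤ volume (U ∩ Icc a v) := by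
            rw [← measure_union hdisj measurableSet_Ioc]
            exact measure_mono hsub
          have h2 := ENNReal.toReal_mono (hfin v) h1
          rw [ENNReal.toReal_add (hfin t) (by rw [Real.volume_Ioc]; exact ENNReal.ofReal_ne_top),
            Real.volume_Ioc, ENNReal.toReal_ofReal (by linarith)] at h2
          linarith
        have hvmem : v ∈ Icc a b := ⟨le_trans hta hvt.le, hv3.2⟩
        have hlipv : f v - f t ≤ K * (v - t) := by
          have h3 := hlip t htab v hvmem
          calc f v - f t ≤ |f v - f t| := le_abs_self _
            _ ≤ K * |v - t| := h3
            _ = K * (v - t) := by rw [abs_of_pos (by linarith : (0:ℝ) < v - t)]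
        refine ⟨hvmem, ?_⟩
        have hKpos : (0:ℝ) ≤ K + |C| + 1 := by linarith [abs_nonneg C]
        nlinarith [hineq, hφv, hlipv, mul_le_mul_of_nonneg_left hφv hKpos]
    have hev2 : Ioc t (min z b) ∈ 𝓝[>] t := Ioc_mem_nhdsGT_of_mem ⟨le_rfl, lt_min hz htb⟩
    obtain ⟨v, hvS, hvz⟩ := (hev.and hev2).exists
    exact ⟨v, hvS, hvz.1, le_trans hvz.2 (min_le_left _ _)⟩
  have hbS : b ∈ S := hSclosed.Icc_subset_of_forall_exists_gt haS hgt (right_mem_Icc.2 hab)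
  have hineqb := hbS.2
  have hKpos : (0:ℝ) ≤ K + |C| + 1 := by linarith [abs_nonneg C]
  nlinarith [hineqb, hφη b, mul_le_mul_of_nonneg_left (hφη b) hKpos]

lemma aux_const_ex (β γ ε lam : ℝ) (hβ : 0 < β) (hγ : 0 < γ) (hε : 0 < ε)
    (hεb : ε < γ ^ 2 * β / 4) (hlam : 0 < lam) :
    ∃ d c : ℝ, 0 < d ∧ d * γ = ε ∧ 2 * d ≤ γ * β ∧ 4 * d ^ 2 ≤ ε * β ∧
      0 < c ∧ 3 * c * γ ≤ ε ∧ 3 * c ≤ 2 * γ * β ∧ c ≤ lam * Real.sqrt (ε / 2) ∧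
      c * (3 * (γ ^ 2 * lam ^ 2 * β + ε * lam ^ 2)) ≤ γ * lam ^ 2 * ε * β := by
  have hs : 0 < Real.sqrt (ε / 2) := Real.sqrt_pos.2 (by linarith)
  have hden : 0 < 3 * (γ ^ 2 * lam ^ 2 * β + ε * lam ^ 2) := by positivity
  refine ⟨ε / γ, min (min (ε / (3 * γ)) (2 * γ * β / 3))
      (min (lam * Real.sqrt (ε / 2)) (γ * lam ^ 2 * ε * β / (3 * (γ ^ 2 * lam ^ 2 * β + ε * lam ^ 2)))),
    by positivity, by field_simp, ?_, ?_, ?_, ?_, ?_, ?_, ?_⟩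
  · rw [show 2 * (ε / γ) = 2 * ε / γ by ring, div_le_iff₀ hγ]; nlinarith
  · rw [show 4 * (ε / γ) ^ 2 = 4 * ε ^ 2 / γ ^ 2 by ring,
      div_le_iff₀ (by positivity : (0:ℝ) < γ ^ 2)]
    nlinarith
  · positivity
  · have h2 := le_trans (min_le_left (min (ε / (3 * γ)) (2 * γ * β / 3))
      (min (lam * Real.sqrt (ε / 2)) (γ * lam ^ 2 * ε * β / (3 * (γ ^ 2 * lam ^ 2 * β + ε * lam ^ 2)))))
      (min_le_left (ε / (3 * γ)) (2 * γ * β / 3))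
    have h3 := mul_le_mul_of_nonneg_right h2 (by positivity : (0:ℝ) ≤ 3 * γ)
    rw [div_mul_cancel₀ _ (by positivity : (3:ℝ) * γ ≠ 0)] at h3
    linarith
  · have h2 := le_trans (min_le_left (min (ε / (3 * γ)) (2 * γ * β / 3))
      (min (lam * Real.sqrt (ε / 2)) (γ * lam ^ 2 * ε * β / (3 * (γ ^ 2 * lam ^ 2 * β + ε * lam ^ 2)))))
      (min_le_right (ε / (3 * γ)) (2 * γ * β / 3))
    have h3 := mul_le_mul_of_nonneg_right h2 (by norm_num : (0:ℝ) ≤ 3)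
    rw [div_mul_cancel₀ _ (by norm_num : (3:ℝ) ≠ 0)] at h3
    linarith
  · exact le_trans (min_le_right _ _) (min_le_left _ _)
  · have h := le_trans (min_le_right (min (ε / (3 * γ)) (2 * γ * β / 3))
      (min (lam * Real.sqrt (ε / 2)) (γ * lam ^ 2 * ε * β / (3 * (γ ^ 2 * lam ^ 2 * β + ε * lam ^ 2)))))
      (min_le_right (lam * Real.sqrt (ε / 2)) (γ * lam ^ 2 * ε * β / (3 * (γ ^ 2 * lam ^ 2 * β + ε * lam ^ 2))))
    calc _ ≤ (γ * lam ^ 2 * ε * β / (3 * (γ ^ 2 * lam ^ 2 * β + ε * lam ^ 2))) *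
        (3 * (γ ^ 2 * lam ^ 2 * β + ε * lam ^ 2)) :=
      mul_le_mul_of_nonneg_right h (le_of_lt hden)
    _ = γ * lam ^ 2 * ε * β := div_mul_cancel₀ _ (ne_of_gt hden)

lemma aux_Vlb (ε β d Y X : ℝ) (hε : 0 < ε) (hβ : 0 < β) (hd0 : 0 < d)
    (hdsq : 4 * d ^ 2 ≤ ε * β) :
    (1/2) * (ε * Y ^ 2 + β * X ^ 2) ≤ ε * Y ^ 2 + β * X ^ 2 + d * (X * Y) := by
  nlinarith [sq_nonneg (d * Y + β * X), sq_nonneg (d * Y - β * X), sq_nonneg Y,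
    mul_pos hε hβ, sq_nonneg (ε * Y + β * X)]

lemma aux_Vub (ε β d Y X : ℝ) (hε : 0 < ε) (hβ : 0 < β) (hd0 : 0 < d)
    (hdsq : 4 * d ^ 2 ≤ ε * β) :
    ε * Y ^ 2 + β * X ^ 2 + d * (X * Y) ≤ (3/2) * (ε * Y ^ 2 + β * X ^ 2) := by
  nlinarith [sq_nonneg (d * Y + β * X), sq_nonneg (d * Y - β * X), sq_nonneg Y,
    mul_pos hε hβ, sq_nonneg (ε * Y + β * X)]

private lemma ineq_int (β γ ε d c Y X : ℝ)
    (hβ : 0 < β) (hγ : 0 < γ) (hε : 0 < ε)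
    (hd0 : 0 < d) (hdγ : d * γ = ε) (h2d : 2 * d ≤ γ * β)
    (hc0 : 0 < c) (h3cd : 3 * c ≤ d) (hcγβ : 3 * c ≤ 2 * γ * β)
    (hVub : ε * Y ^ 2 + β * X ^ 2 + d * (X * Y) ≤ 3 / 2 * (ε * Y ^ 2 + β * X ^ 2)) :
    2 * ε * Y * (β * X) + 2 * β * X * (-(γ * β * X) - ε * Y)
      + d * ((-(γ * β * X) - ε * Y) * Y + X * (β * X))
      ≤ -c * (ε * Y ^ 2 + β * X ^ 2 + d * (X * Y)) := by
  have key : (γ * β ^ 2 * X ^ 2 - d * β * X ^ 2 + d * γ * β * X * Y + (d * ε / 2) * Y ^ 2)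
        * (2 * ε)
      = d * (ε * Y + γ * β * X) ^ 2 + ε * β * (γ * β - 2 * d) * X ^ 2 := by
    linear_combination (-(γ * β ^ 2 * X ^ 2)) * hdγ
  have h1' : 0 ≤ d * (ε * Y + γ * β * X) ^ 2 + ε * β * (γ * β - 2 * d) * X ^ 2 :=
    add_nonneg (mul_nonneg hd0.le (sq_nonneg _))
      (mul_nonneg (mul_nonneg (mul_nonneg hε.le hβ.le) (by linarith)) (sq_nonneg X))
  have hGpos : 0 ≤ γ * β ^ 2 * X ^ 2 - d * β * X ^ 2 + d * γ * β * X * Y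
      + (d * ε / 2) * Y ^ 2 := by nlinarith [key, h1', hε]
  have step2 : c * (ε * Y ^ 2 + β * X ^ 2 + d * (X * Y))
      ≤ (d * ε / 2) * Y ^ 2 + γ * β ^ 2 * X ^ 2 := by
    nlinarith [mul_le_mul_of_nonneg_left hVub hc0.le, h3cd, hcγβ,
      mul_nonneg hε.le (sq_nonneg Y), mul_nonneg hβ.le (sq_nonneg X)]
  nlinarith [hGpos, step2]

private lemma ineq_b1 (β γ ε lam d Y X : ℝ)
    (hβ : 0 < β) (hγ : 0 < γ) (hε : 0 < ε) (hlam : 0 < lam)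
    (hd0 : 0 < d) (h2d : 2 * d ≤ γ * β)
    (hβX : β * X = -lam) (hY : γ * lam ≤ ε * Y) :
    (2 * ε * Y * (-lam) + 2 * β * X * 0 + d * (0 * Y + X * (-lam))) * β
      ≤ (-(ε * lam * Y)) * β := by
  have h6 : d * (0 * Y + X * (-lam)) * β = d * lam ^ 2 := by
    linear_combination (-(d * lam)) * hβX
  nlinarith [h6, mul_le_mul_of_nonneg_left hY (mul_nonneg hβ.le hlam.le),
    mul_le_mul_of_nonneg_right h2d (mul_nonneg hlam.le hlam.le)]

private lemma ineq_b2 (β γ ε lam d Y X : ℝ)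
    (hβ : 0 < β) (hγ : 0 < γ) (hε : 0 < ε) (hlam : 0 < lam) (hεb : ε < γ ^ 2 * β / 4)
    (h7 : β ^ 2 * X ^ 2 = lam ^ 2) (hY : γ * lam ≤ ε * Y) (hYpos : 0 < Y)
    (hVub : ε * Y ^ 2 + β * X ^ 2 + d * (X * Y) ≤ 3 / 2 * (ε * Y ^ 2 + β * X ^ 2)) :
    ε * Y ^ 2 + β * X ^ 2 + d * (X * Y) ≤ 2 * ε * Y ^ 2 := by
  nlinarith [hVub, h7, mul_le_mul hY hY (mul_nonneg hγ.le hlam.le)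
    (mul_nonneg hε.le hYpos.le), mul_pos hε hβ, mul_pos hε hlam]

private lemma ineq_b3 (β γ ε lam d Y X : ℝ)
    (hβ : 0 < β) (hγ : 0 < γ) (hε : 0 < ε) (hlam : 0 < lam)
    (hd0 : 0 < d) (h2d : 2 * d ≤ γ * β)
    (hβX : β * X = -lam) (hm : 0 < γ * lam - ε * Y) (hY0 : 0 ≤ Y) (hdY : d * Y ≤ lam) :
    (2 * ε * Y * (-lam) + 2 * β * X * (γ * lam - ε * Y)
      + d * ((γ * lam - ε * Y) * Y + X * (-lam))) * β ≤ (-(γ * lam ^ 2 / 2)) * β := by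
  have hid : (2 * ε * Y * (-lam) + 2 * β * X * (γ * lam - ε * Y)
      + d * ((γ * lam - ε * Y) * Y + X * (-lam))) * β
      = -2 * ε * lam * Y * β + ((γ * lam - ε * Y) * (-2 * lam + d * Y)) * β
        + d * lam ^ 2 := by
    linear_combination (2 * β * (γ * lam - ε * Y) - d * lam) * hβX
  rw [hid]
  have hprod : (γ * lam - ε * Y) * (-2 * lam + d * Y)
      ≤ (γ * lam - ε * Y) * (-lam) :=
    mul_le_mul_of_nonneg_left (by linarith) hm.le
  nlinarith [mul_le_mul_of_nonneg_right hprod hβ.le,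
    mul_nonneg (mul_nonneg (mul_nonneg hε.le hlam.le) hY0) hβ.le,
    mul_le_mul_of_nonneg_right h2d (mul_nonneg hlam.le hlam.le)]

private lemma ineq_b4 (β γ ε lam d Y X : ℝ)
    (hβ : 0 < β) (hγ : 0 < γ) (hε : 0 < ε) (hlam : 0 < lam)
    (h7 : β ^ 2 * X ^ 2 = lam ^ 2) (hεY : ε * Y ≤ γ * lam) (hY0 : 0 ≤ Y)
    (hVub : ε * Y ^ 2 + β * X ^ 2 + d * (X * Y) ≤ 3 / 2 * (ε * Y ^ 2 + β * X ^ 2)) :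
    2 * ε * β * (ε * Y ^ 2 + β * X ^ 2 + d * (X * Y))
      ≤ 3 * (γ ^ 2 * lam ^ 2 * β + ε * lam ^ 2) := by
  nlinarith [hVub, h7, mul_le_mul hεY hεY (mul_nonneg hε.le hY0)
    (mul_nonneg hγ.le hlam.le), mul_pos hε hβ]

private lemma ineq_b5 (β γ ε lam d c Y X : ℝ)
    (hβ : 0 < β) (hγ : 0 < γ) (hε : 0 < ε) (hlam : 0 < lam)
    (hd0 : 0 < d) (h2d : 2 * d ≤ γ * β) (hc0 : 0 < c) (h3cd : 3 * c ≤ d)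
    (hβX : β * X = -lam) (h7 : β ^ 2 * X ^ 2 = lam ^ 2) (hY0 : Y < 0)
    (hVub : ε * Y ^ 2 + β * X ^ 2 + d * (X * Y) ≤ 3 / 2 * (ε * Y ^ 2 + β * X ^ 2)) :
    (2 * ε * Y * (-lam) + 2 * β * X * (γ * lam - ε * Y)
      + d * ((γ * lam - ε * Y) * Y + X * (-lam))) * β
      ≤ (-c * (ε * Y ^ 2 + β * X ^ 2 + d * (X * Y))) * β := by
  have hid : (2 * ε * Y * (-lam) + 2 * β * X * (γ * lam - ε * Y)
      + d * ((γ * lam - ε * Y) * Y + X * (-lam))) * β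
      = -2 * γ * β * lam ^ 2 + d * γ * β * lam * Y - d * ε * β * Y ^ 2
        + d * lam ^ 2 := by
    linear_combination (2 * β * (γ * lam - ε * Y) - d * lam) * hβX
  rw [hid]
  have hVβ : (ε * Y ^ 2 + β * X ^ 2 + d * (X * Y)) * β
      ≤ (3 / 2) * (ε * β * Y ^ 2 + lam ^ 2) := by
    nlinarith [mul_le_mul_of_nonneg_right hVub hβ.le, h7]
  have hcVβ : -((3 / 2) * c * (ε * β * Y ^ 2 + lam ^ 2))
      ≤ -c * (ε * Y ^ 2 + β * X ^ 2 + d * (X * Y)) * β := by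
    nlinarith [mul_le_mul_of_nonneg_left hVβ hc0.le]
  have hend : -2 * γ * β * lam ^ 2 + d * γ * β * lam * Y - d * ε * β * Y ^ 2
      + d * lam ^ 2 ≤ -((3 / 2) * c * (ε * β * Y ^ 2 + lam ^ 2)) := by
    nlinarith [h3cd, h2d, mul_nonneg (mul_nonneg (mul_nonneg hd0.le hγ.le) hβ.le)
      (mul_nonneg hlam.le (neg_nonneg.2 hY0.le)),
      mul_nonneg (mul_nonneg hε.le hβ.le) (sq_nonneg Y), sq_nonneg lam,
      mul_pos (mul_pos hε hβ) (mul_pos hlam hlam)]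
  calc -2 * γ * β * lam ^ 2 + d * γ * β * lam * Y - d * ε * β * Y ^ 2 + d * lam ^ 2
      ≤ -((3 / 2) * c * (ε * β * Y ^ 2 + lam ^ 2)) := hend
    _ ≤ -c * (ε * Y ^ 2 + β * X ^ 2 + d * (X * Y)) * β := hcVβ
    _ = (-c * (ε * Y ^ 2 + β * X ^ 2 + d * (X * Y))) * β := by ring

lemma aux_deriv_bnd (β γ ε lam d c Y X y' x' : ℝ)
    (hβ : 0 < β) (hγ : 0 < γ) (hε : 0 < ε) (hεb : ε < γ ^ 2 * β / 4) (hlam : 0 < lam)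
    (hd0 : 0 < d) (hdγ : d * γ = ε) (h2d : 2 * d ≤ γ * β) (hdsq : 4 * d ^ 2 ≤ ε * β)
    (hc0 : 0 < c) (hcd : 3 * c * γ ≤ ε) (hcγβ : 3 * c ≤ 2 * γ * β)
    (hcs : c ≤ lam * Real.sqrt (ε / 2))
    (hc4 : c * (3 * (γ ^ 2 * lam ^ 2 * β + ε * lam ^ 2)) ≤ γ * lam ^ 2 * ε * β)
    (hX : -lam / β ≤ X)
    (h1 : -lam / β < X → y' = β * X ∧ x' = -(γ * β * X) - ε * Y)
    (h2 : X = -lam / β → y' = -lam ∧ x' = max (γ * lam - ε * Y) 0) :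
    2 * ε * Y * y' + 2 * β * X * x' + d * (x' * Y + X * y')
      ≤ -c * min (ε * Y ^ 2 + β * X ^ 2 + d * (X * Y))
          (Real.sqrt (ε * Y ^ 2 + β * X ^ 2 + d * (X * Y))) := by
  have hVub := aux_Vub ε β d Y X hε hβ hd0 hdsq
  have hVlb := aux_Vlb ε β d Y X hε hβ hd0 hdsq
  have hV0 : 0 ≤ ε * Y ^ 2 + β * X ^ 2 + d * (X * Y) := by nlinarith [sq_nonneg Y, sq_nonneg X]
  have hmin_le_V : min (ε * Y ^ 2 + β * X ^ 2 + d * (X * Y))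
      (Real.sqrt (ε * Y ^ 2 + β * X ^ 2 + d * (X * Y))) ≤ ε * Y ^ 2 + β * X ^ 2 + d * (X * Y) :=
    min_le_left _ _
  have hmin_le_S : min (ε * Y ^ 2 + β * X ^ 2 + d * (X * Y))
      (Real.sqrt (ε * Y ^ 2 + β * X ^ 2 + d * (X * Y)))
        ≤ Real.sqrt (ε * Y ^ 2 + β * X ^ 2 + d * (X * Y)) := min_le_right _ _
  have h3cd : 3 * c ≤ d := le_of_mul_le_mul_right (by linarith : 3 * c * γ ≤ d * γ) hγ
  have hcmin : c * min (ε * Y ^ 2 + β * X ^ 2 + d * (X * Y))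
      (Real.sqrt (ε * Y ^ 2 + β * X ^ 2 + d * (X * Y)))
      ≤ c * (ε * Y ^ 2 + β * X ^ 2 + d * (X * Y)) :=
    mul_le_mul_of_nonneg_left hmin_le_V hc0.le
  rcases lt_or_eq_of_le hX with hlt | heq
  · obtain ⟨hy', hx'⟩ := h1 hlt
    rw [hy', hx']
    have := ineq_int β γ ε d c Y X hβ hγ hε hd0 hdγ h2d hc0 h3cd hcγβ hVub
    linarith
  · obtain ⟨hy', hx'⟩ := h2 heq.symm
    rw [hy', hx']
    have hβX : β * X = -lam := by
      rw [← heq]; field_simp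
    have h7 : β ^ 2 * X ^ 2 = lam ^ 2 := by linear_combination (β * X - lam) * hβX
    rcases le_or_gt (γ * lam - ε * Y) 0 with hm | hm
    · rw [max_eq_right hm]
      have hY : γ * lam ≤ ε * Y := by linarith
      have hYpos : 0 < Y := by nlinarith [mul_pos hγ hlam]
      have hD : 2 * ε * Y * (-lam) + 2 * β * X * 0 + d * (0 * Y + X * (-lam))
          ≤ -(ε * lam * Y) :=
        le_of_mul_le_mul_right (ineq_b1 β γ ε lam d Y X hβ hγ hε hlam hd0 h2d hβX hY) hβ
      have hVle2 := ineq_b2 β γ ε lam d Y X hβ hγ hε hlam hεb h7 hY hYpos hVub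
      have hsqrt1 : Real.sqrt (ε * Y ^ 2 + β * X ^ 2 + d * (X * Y))
          ≤ Real.sqrt (2 * ε * Y ^ 2) := Real.sqrt_le_sqrt hVle2
      have hsqrt2 : Real.sqrt (ε / 2) * Real.sqrt (2 * ε * Y ^ 2) = ε * Y := by
        rw [← Real.sqrt_mul (by positivity), show ε / 2 * (2 * ε * Y ^ 2) = (ε * Y) ^ 2 by ring,
          Real.sqrt_sq (by positivity)]
      have t1 : c * min (ε * Y ^ 2 + β * X ^ 2 + d * (X * Y))
          (Real.sqrt (ε * Y ^ 2 + β * X ^ 2 + d * (X * Y)))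
          ≤ c * Real.sqrt (ε * Y ^ 2 + β * X ^ 2 + d * (X * Y)) :=
        mul_le_mul_of_nonneg_left hmin_le_S hc0.le
      have t2 : c * Real.sqrt (ε * Y ^ 2 + β * X ^ 2 + d * (X * Y))
          ≤ (lam * Real.sqrt (ε / 2)) * Real.sqrt (2 * ε * Y ^ 2) :=
        mul_le_mul hcs hsqrt1 (Real.sqrt_nonneg _) (by positivity)
      have t3 : (lam * Real.sqrt (ε / 2)) * Real.sqrt (2 * ε * Y ^ 2) = ε * lam * Y := by
        rw [mul_assoc, hsqrt2]; ring
      linarith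
    · rw [max_eq_left hm.le]
      have hdY : d * Y ≤ lam := by
        rcases le_or_gt Y 0 with h | h
        · exact le_trans (mul_nonpos_of_nonneg_of_nonpos hd0.le h) hlam.le
        · have hh : γ * (d * Y) ≤ γ * lam := by
            have e1 : γ * (d * Y) = ε * Y := by rw [← hdγ]; ring
            rw [e1]; linarith
          exact le_of_mul_le_mul_left hh hγ
      rcases le_or_gt 0 Y with hY0 | hY0
      · have hD : 2 * ε * Y * (-lam) + 2 * β * X * (γ * lam - ε * Y)
            + d * ((γ * lam - ε * Y) * Y + X * (-lam)) ≤ -(γ * lam ^ 2 / 2) :=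
          le_of_mul_le_mul_right
            (ineq_b3 β γ ε lam d Y X hβ hγ hε hlam hd0 h2d hβX hm hY0 hdY) hβ
        have hεY : ε * Y ≤ γ * lam := by linarith
        have h9 := ineq_b4 β γ ε lam d Y X hβ hγ hε hlam h7 hεY hY0 hVub
        have h8 : c * (2 * ε * β * (ε * Y ^ 2 + β * X ^ 2 + d * (X * Y)))
            ≤ γ * lam ^ 2 * (ε * β) :=
          le_trans (mul_le_mul_of_nonneg_left h9 hc0.le) (by linarith [hc4])
        have h8' : (2 * (c * (ε * Y ^ 2 + β * X ^ 2 + d * (X * Y)))) * (ε * β)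
            ≤ (γ * lam ^ 2) * (ε * β) := by linarith [h8]
        have hcV : 2 * (c * (ε * Y ^ 2 + β * X ^ 2 + d * (X * Y))) ≤ γ * lam ^ 2 :=
          le_of_mul_le_mul_right h8' (mul_pos hε hβ)
        linarith
      · have hD := le_of_mul_le_mul_right
          (ineq_b5 β γ ε lam d c Y X hβ hγ hε hlam hd0 h2d hc0 h3cd hβX h7 hY0 hVub) hβ
        linarith

lemma aux_V_ae (β γ ε lam d c : ℝ) (y x : ℝ → ℝ)
    (hβ : 0 < β) (hγ : 0 < γ) (hε : 0 < ε) (hεb : ε < γ ^ 2 * β / 4) (hlam : 0 < lam)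
    (hd0 : 0 < d) (hdγ : d * γ = ε) (h2d : 2 * d ≤ γ * β) (hdsq : 4 * d ^ 2 ≤ ε * β)
    (hc0 : 0 < c) (hcd : 3 * c * γ ≤ ε) (hcγβ : 3 * c ≤ 2 * γ * β)
    (hcs : c ≤ lam * Real.sqrt (ε / 2))
    (hc4 : c * (3 * (γ ^ 2 * lam ^ 2 * β + ε * lam ^ 2)) ≤ γ * lam ^ 2 * ε * β)
    (hfm : IsFluidModel β γ ε lam y x) :
    ∀ᵐ u ∂(volume.restrict (Ici (0:ℝ))),
      ∃ V', HasDerivAt (fun r => ε * (y r) ^ 2 + β * (x r) ^ 2 + d * (x r * y r)) V' u ∧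
        V' ≤ -c * min (ε * (y u) ^ 2 + β * (x u) ^ 2 + d * (x u * y u))
            (Real.sqrt (ε * (y u) ^ 2 + β * (x u) ^ 2 + d * (x u * y u))) := by
  obtain ⟨-, hge, hae⟩ := hfm
  filter_upwards [hae, ae_restrict_mem measurableSet_Ici] with u hu hu0
  obtain ⟨y', x', hy, hx, hdyn1, hdyn2⟩ := hu
  have hV : HasDerivAt (fun r => ε * (y r) ^ 2 + β * (x r) ^ 2 + d * (x r * y r))
      (2 * ε * y u * y' + 2 * β * x u * x' + d * (x' * y u + x u * y')) u := by
    have h := (((hy.pow 2).const_mul ε).add ((hx.pow 2).const_mul β)).add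
      ((hx.mul hy).const_mul d)
    exact h.congr_deriv (by push_cast; ring)
  exact ⟨_, hV, aux_deriv_bnd β γ ε lam d c (y u) (x u) y' x' hβ hγ hε hεb hlam hd0 hdγ
    h2d hdsq hc0 hcd hcγβ hcs hc4 (hge u hu0) hdyn1 hdyn2⟩

lemma aux_V_diff (β γ ε lam d : ℝ) (y x : ℝ → ℝ)
    (hβ : 0 < β) (hε : 0 < ε) (hd0 : 0 < d)
    (hfm : IsFluidModel β γ ε lam y x) (s t C : ℝ) (h0s : 0 ≤ s) (hst : s ≤ t)
    (hae : ∀ᵐ u ∂(volume.restrict (Icc s t)),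
      ∃ V', HasDerivAt (fun r => ε * (y r) ^ 2 + β * (x r) ^ 2 + d * (x r * y r)) V' u ∧
        V' ≤ C) :
    ε * (y t) ^ 2 + β * (x t) ^ 2 + d * (x t * y t)
      ≤ ε * (y s) ^ 2 + β * (x s) ^ 2 + d * (x s * y s) + C * (t - s) := by
  rcases eq_or_lt_of_le hst with rfl | hlt
  · simp
  · have ht0 : 0 < t := lt_of_le_of_lt h0s hlt
    obtain ⟨K₀, hKy, hKx⟩ := hfm.1 t ht0
    have hsub : Icc s t ⊆ Icc 0 t := Icc_subset_Icc h0s le_rfl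
    obtain ⟨Ry, hRy⟩ := IsCompact.exists_bound_of_continuousOn isCompact_Icc
      ((hKy.continuousOn).mono hsub)
    obtain ⟨Rx, hRx⟩ := IsCompact.exists_bound_of_continuousOn isCompact_Icc
      ((hKx.continuousOn).mono hsub)
    set R := max (max Ry Rx) 0 with hRdef
    have hR0 : 0 ≤ R := le_max_right _ _
    have hyB : ∀ u ∈ Icc s t, |y u| ≤ R := fun u hu =>
      le_trans (hRy u hu) (le_trans (le_max_left _ _) (le_max_left _ _))
    have hxB : ∀ u ∈ Icc s t, |x u| ≤ R := fun u hu =>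
      le_trans (hRx u hu) (le_trans (le_max_right _ _) (le_max_left _ _))
    have hyL : ∀ u ∈ Icc s t, ∀ v ∈ Icc s t, |y v - y u| ≤ (K₀ : ℝ) * |v - u| := by
      intro u hu v hv
      have := hKy.dist_le_mul v (hsub hv) u (hsub hu)
      rw [Real.dist_eq, Real.dist_eq] at this
      exact this
    have hxL : ∀ u ∈ Icc s t, ∀ v ∈ Icc s t, |x v - x u| ≤ (K₀ : ℝ) * |v - u| := by
      intro u hu v hv
      have := hKx.dist_le_mul v (hsub hv) u (hsub hu)
      rw [Real.dist_eq, Real.dist_eq] at this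
      exact this
    have hK0 : (0:ℝ) ≤ 2 * R * (K₀ : ℝ) * (ε + β + d) := by positivity
    have key := aux_ae_deriv_le (fun r => ε * (y r) ^ 2 + β * (x r) ^ 2 + d * (x r * y r))
      s t (2 * R * (K₀ : ℝ) * (ε + β + d)) C hst hK0 ?_ hae
    · have key2 : ε * (y t) ^ 2 + β * (x t) ^ 2 + d * (x t * y t)
          - (ε * (y s) ^ 2 + β * (x s) ^ 2 + d * (x s * y s)) ≤ C * (t - s) := key
      linarith
    · intro u hu v hv
      have h1 : |(y v) ^ 2 - (y u) ^ 2| ≤ 2 * R * ((K₀ : ℝ) * |v - u|) := by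
        rw [show (y v) ^ 2 - (y u) ^ 2 = (y v + y u) * (y v - y u) by ring, abs_mul]
        apply mul_le_mul (le_trans (abs_add_le _ _) (by linarith [hyB v hv, hyB u hu]))
          (hyL u hu v hv) (abs_nonneg _) (by positivity)
      have h2 : |(x v) ^ 2 - (x u) ^ 2| ≤ 2 * R * ((K₀ : ℝ) * |v - u|) := by
        rw [show (x v) ^ 2 - (x u) ^ 2 = (x v + x u) * (x v - x u) by ring, abs_mul]
        apply mul_le_mul (le_trans (abs_add_le _ _) (by linarith [hxB v hv, hxB u hu]))
          (hxL u hu v hv) (abs_nonneg _) (by positivity)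
      have h3 : |x v * y v - x u * y u| ≤ 2 * R * ((K₀ : ℝ) * |v - u|) := by
        rw [show x v * y v - x u * y u = x v * (y v - y u) + y u * (x v - x u) by ring]
        refine le_trans (abs_add_le _ _) ?_
        rw [abs_mul, abs_mul]
        have e1 : |x v| * |y v - y u| ≤ R * ((K₀ : ℝ) * |v - u|) :=
          mul_le_mul (hxB v hv) (hyL u hu v hv) (abs_nonneg _) hR0
        have e2 : |y u| * |x v - x u| ≤ R * ((K₀ : ℝ) * |v - u|) :=
          mul_le_mul (hyB u hu) (hxL u hu v hv) (abs_nonneg _) hR0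
        linarith
      have e : (ε * (y v) ^ 2 + β * (x v) ^ 2 + d * (x v * y v))
          - (ε * (y u) ^ 2 + β * (x u) ^ 2 + d * (x u * y u))
          = ε * ((y v) ^ 2 - (y u) ^ 2) + β * ((x v) ^ 2 - (x u) ^ 2)
            + d * (x v * y v - x u * y u) := by ring
      rw [e]
      have habs : |ε * ((y v) ^ 2 - (y u) ^ 2) + β * ((x v) ^ 2 - (x u) ^ 2)
          + d * (x v * y v - x u * y u)|
          ≤ ε * |(y v) ^ 2 - (y u) ^ 2| + β * |(x v) ^ 2 - (x u) ^ 2|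
            + d * |x v * y v - x u * y u| := by
        calc |ε * ((y v) ^ 2 - (y u) ^ 2) + β * ((x v) ^ 2 - (x u) ^ 2)
            + d * (x v * y v - x u * y u)|
            ≤ |ε * ((y v) ^ 2 - (y u) ^ 2) + β * ((x v) ^ 2 - (x u) ^ 2)|
              + |d * (x v * y v - x u * y u)| := abs_add_le _ _
          _ ≤ |ε * ((y v) ^ 2 - (y u) ^ 2)| + |β * ((x v) ^ 2 - (x u) ^ 2)|
              + |d * (x v * y v - x u * y u)| := by
                linarith [abs_add_le (ε * ((y v) ^ 2 - (y u) ^ 2)) (β * ((x v) ^ 2 - (x u) ^ 2))]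
          _ = ε * |(y v) ^ 2 - (y u) ^ 2| + β * |(x v) ^ 2 - (x u) ^ 2|
              + d * |x v * y v - x u * y u| := by
                rw [abs_mul, abs_mul, abs_mul, abs_of_pos hε, abs_of_pos hβ, abs_of_pos hd0]
      have f1 := mul_le_mul_of_nonneg_left h1 hε.le
      have f2 := mul_le_mul_of_nonneg_left h2 hβ.le
      have f3 := mul_le_mul_of_nonneg_left h3 hd0.le
      calc |ε * ((y v) ^ 2 - (y u) ^ 2) + β * ((x v) ^ 2 - (x u) ^ 2)
          + d * (x v * y v - x u * y u)|
          ≤ ε * |(y v) ^ 2 - (y u) ^ 2| + β * |(x v) ^ 2 - (x u) ^ 2|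
            + d * |x v * y v - x u * y u| := habs
        _ ≤ 2 * R * (K₀ : ℝ) * (ε + β + d) * |v - u| := by nlinarith [f1, f2, f3]

lemma aux_normlb (ε β d m Y X : ℝ) (hε : 0 < ε) (hβ : 0 < β) (hd0 : 0 < d)
    (hdsq : 4 * d ^ 2 ≤ ε * β) (hm1 : m ≤ ε) (hm2 : m ≤ β) :
    m * (Y ^ 2 + X ^ 2) ≤ 2 * (ε * Y ^ 2 + β * X ^ 2 + d * (X * Y)) := by
  nlinarith [aux_Vlb ε β d Y X hε hβ hd0 hdsq, sq_nonneg Y, sq_nonneg X]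

lemma aux_V0ub (ε β d W Y X : ℝ) (hε : 0 < ε) (hβ : 0 < β) (hd0 : 0 < d)
    (hdsq : 4 * d ^ 2 ≤ ε * β) (hW : Y ^ 2 + X ^ 2 ≤ W) :
    ε * Y ^ 2 + β * X ^ 2 + d * (X * Y) ≤ (3/2) * (ε + β) * W := by
  nlinarith [aux_Vub ε β d Y X hε hβ hd0 hdsq, sq_nonneg Y, sq_nonneg X]

lemma aux_main_est (β γ ε lam : ℝ) (hβ : 0 < β) (hγ : 0 < γ) (hε : 0 < ε)
    (hεb : ε < γ ^ 2 * β / 4) (hlam : 0 < lam) (W : ℝ) (hW0 : 0 ≤ W) :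
    ∃ M : ℝ, ∀ δ : ℝ, 0 < δ → ∃ T : ℝ, 0 ≤ T ∧ ∀ y x : ℝ → ℝ,
      IsFluidModel β γ ε lam y x → (y 0) ^ 2 + (x 0) ^ 2 ≤ W →
      (∀ t, 0 ≤ t → Real.sqrt ((y t) ^ 2 + (x t) ^ 2) ≤ M) ∧
      (∀ t, T ≤ t → Real.sqrt ((y t) ^ 2 + (x t) ^ 2) ≤ δ) := by
  obtain ⟨d, c, hd0, hdγ, h2d, hdsq, hc0, hcd, hcγβ, hcs, hc4⟩ :=
    aux_const_ex β γ ε lam hβ hγ hε hεb hlam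
  set m := min ε β with hm
  have hm0 : 0 < m := lt_min hε hβ
  set W' := (3/2) * (ε + β) * W with hW'
  have hW'0 : 0 ≤ W' := by positivity
  refine ⟨Real.sqrt (2 * W' / m), ?_⟩
  intro δ hδ
  set a0 := m * δ ^ 2 / 2 with ha0def
  have ha0 : 0 < a0 := by positivity
  set k := c * min a0 (Real.sqrt a0) with hk
  have hk0 : 0 < k := mul_pos hc0 (lt_min ha0 (Real.sqrt_pos.2 ha0))
  refine ⟨max 1 (W' / k), le_trans zero_le_one (le_max_left _ _), ?_⟩
  intro y x hfm hW
  -- pointwise nonnegativity and bounds of V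
  have hVnn : ∀ u : ℝ, 0 ≤ ε * (y u) ^ 2 + β * (x u) ^ 2 + d * (x u * y u) := fun u =>
    le_trans (by positivity) (aux_Vlb ε β d (y u) (x u) hε hβ hd0 hdsq)
  have haeG := aux_V_ae β γ ε lam d c y x hβ hγ hε hεb hlam hd0 hdγ h2d hdsq hc0 hcd
    hcγβ hcs hc4 hfm
  -- monotonicity of V
  have hmono : ∀ s t : ℝ, 0 ≤ s → s ≤ t →
      ε * (y t) ^ 2 + β * (x t) ^ 2 + d * (x t * y t)
        ≤ ε * (y s) ^ 2 + β * (x s) ^ 2 + d * (x s * y s) := by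
    intro s t h0s hst
    have hae1 : ∀ᵐ u ∂(volume.restrict (Icc s t)),
        ∃ V', HasDerivAt (fun r => ε * (y r) ^ 2 + β * (x r) ^ 2 + d * (x r * y r)) V' u ∧
          V' ≤ 0 := by
      have := ae_restrict_of_ae_restrict_of_subset
        (Icc_subset_Ici_self.trans (Ici_subset_Ici.2 h0s) : Icc s t ⊆ Ici 0) haeG
      filter_upwards [this] with u hu
      obtain ⟨V', h1, h2⟩ := hu
      refine ⟨V', h1, le_trans h2 ?_⟩
      have hmin0 : 0 ≤ min (ε * (y u) ^ 2 + β * (x u) ^ 2 + d * (x u * y u))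
          (Real.sqrt (ε * (y u) ^ 2 + β * (x u) ^ 2 + d * (x u * y u))) :=
        le_min (hVnn u) (Real.sqrt_nonneg _)
      have := mul_nonneg hc0.le hmin0
      linarith
    have := aux_V_diff β γ ε lam d y x hβ hε hd0 hfm s t 0 h0s hst hae1
    linarith
  have hV0W : ε * (y 0) ^ 2 + β * (x 0) ^ 2 + d * (x 0 * y 0) ≤ W' :=
    aux_V0ub ε β d W (y 0) (x 0) hε hβ hd0 hdsq hW
  have hbd : ∀ t : ℝ, 0 ≤ t → ε * (y t) ^ 2 + β * (x t) ^ 2 + d * (x t * y t) ≤ W' :=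
    fun t ht => le_trans (hmono 0 t le_rfl ht) hV0W
  -- decay
  have hdecay : ∀ t : ℝ, max 1 (W' / k) ≤ t →
      ε * (y t) ^ 2 + β * (x t) ^ 2 + d * (x t * y t) ≤ a0 := by
    intro t ht
    by_contra hcon
    push_neg at hcon
    have ht1 : (1:ℝ) ≤ t := le_trans (le_max_left _ _) ht
    have ht0 : (0:ℝ) ≤ t := by linarith
    have hae2 : ∀ᵐ u ∂(volume.restrict (Icc 0 t)),
        ∃ V', HasDerivAt (fun r => ε * (y r) ^ 2 + β * (x r) ^ 2 + d * (x r * y r)) V' u ∧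
          V' ≤ -k := by
      have := ae_restrict_of_ae_restrict_of_subset (Icc_subset_Ici_self : Icc 0 t ⊆ Ici 0) haeG
      filter_upwards [this, ae_restrict_mem measurableSet_Icc] with u hu humem
      obtain ⟨V', h1, h2⟩ := hu
      refine ⟨V', h1, le_trans h2 ?_⟩
      have hVa : a0 ≤ ε * (y u) ^ 2 + β * (x u) ^ 2 + d * (x u * y u) :=
        le_trans hcon.le (hmono u t humem.1 humem.2)
      have hminle : min a0 (Real.sqrt a0)
          ≤ min (ε * (y u) ^ 2 + β * (x u) ^ 2 + d * (x u * y u))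
            (Real.sqrt (ε * (y u) ^ 2 + β * (x u) ^ 2 + d * (x u * y u))) :=
        min_le_min hVa (Real.sqrt_le_sqrt hVa)
      rw [hk]
      have := mul_le_mul_of_nonneg_left hminle hc0.le
      linarith
    have hdiff := aux_V_diff β γ ε lam d y x hβ hε hd0 hfm 0 t (-k) le_rfl ht0 hae2
    have hkt : W' ≤ k * t := by
      have h1 : W' / k ≤ t := le_trans (le_max_right _ _) ht
      calc W' = k * (W' / k) := by field_simp
        _ ≤ k * t := mul_le_mul_of_nonneg_left h1 hk0.le
    have := hVnn t
    have h2 := hV0W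
    -- V t ≤ V 0 - k t ≤ W' - W' = 0 < a0 < V t
    have hVt := hmono 0 0 le_rfl le_rfl
    linarith [hdiff]
  -- translate to norms
  have hnorm : ∀ t : ℝ, m * ((y t) ^ 2 + (x t) ^ 2)
      ≤ 2 * (ε * (y t) ^ 2 + β * (x t) ^ 2 + d * (x t * y t)) := fun t =>
    aux_normlb ε β d m (y t) (x t) hε hβ hd0 hdsq (min_le_left _ _) (min_le_right _ _)
  constructor
  · intro t ht
    have h1 := hbd t ht
    have h2 := hnorm t
    have h3 : (y t) ^ 2 + (x t) ^ 2 ≤ 2 * W' / m := by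
      rw [le_div_iff₀ hm0]
      have h4 := hnorm t
      nlinarith [h1, h2, hm0]
    calc Real.sqrt ((y t) ^ 2 + (x t) ^ 2) ≤ Real.sqrt (2 * W' / m) :=
      Real.sqrt_le_sqrt h3
      _ = _ := rfl
  · intro t ht
    have h1 := hdecay t ht
    have h2 := hnorm t
    have h3 : (y t) ^ 2 + (x t) ^ 2 ≤ δ ^ 2 := by
      have : m * ((y t) ^ 2 + (x t) ^ 2) ≤ m * δ ^ 2 := by
        rw [ha0def] at h1; linarith
      exact le_of_mul_le_mul_left this hm0
    calc Real.sqrt ((y t) ^ 2 + (x t) ^ 2) ≤ Real.sqrt (δ ^ 2) := Real.sqrt_le_sqrt h3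
      _ = δ := Real.sqrt_sq hδ.le

/-- every fluid model converges to `(0,0)` and is bounded; moreover
boundedness and convergence are uniform over initial states in compact sets. -/
theorem stmt_1 (β γ ε lam : ℝ) (hβ : 0 < β) (hγ : 0 < γ) (hε : 0 < ε)
    (hεbound : ε < γ ^ 2 * β / 4) (hlam : 0 < lam) :
    (∀ y x : ℝ → ℝ, IsFluidModel β γ ε lam y x →
      Tendsto (fun t => (y t, x t)) atTop (nhds ((0 : ℝ), (0 : ℝ))) ∧
      ∃ M : ℝ, ∀ t : ℝ, 0 ≤ t → Real.sqrt ((y t) ^ 2 + (x t) ^ 2) ≤ M) ∧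
    (∀ K : Set (ℝ × ℝ), IsCompact K → K ⊆ {p : ℝ × ℝ | -lam / β ≤ p.2} →
      (∃ M : ℝ, ∀ y x : ℝ → ℝ, IsFluidModel β γ ε lam y x → (y 0, x 0) ∈ K →
        ∀ t : ℝ, 0 ≤ t → Real.sqrt ((y t) ^ 2 + (x t) ^ 2) ≤ M) ∧
      (∀ δ : ℝ, 0 < δ → ∃ T : ℝ, ∀ y x : ℝ → ℝ,
        IsFluidModel β γ ε lam y x → (y 0, x 0) ∈ K →
        ∀ t : ℝ, T ≤ t → Real.sqrt ((y t) ^ 2 + (x t) ^ 2) ≤ δ)) := by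
  have hdist : ∀ (y x : ℝ → ℝ) (t : ℝ),
      dist ((y t, x t) : ℝ × ℝ) ((0 : ℝ), (0 : ℝ)) ≤ Real.sqrt ((y t) ^ 2 + (x t) ^ 2) := by
    intro y x t
    rw [Prod.dist_eq]
    have hy : dist (y t) 0 ≤ Real.sqrt ((y t) ^ 2 + (x t) ^ 2) := by
      rw [Real.dist_eq, sub_zero, ← Real.sqrt_sq_eq_abs]
      exact Real.sqrt_le_sqrt (by nlinarith [sq_nonneg (x t)])
    have hx : dist (x t) 0 ≤ Real.sqrt ((y t) ^ 2 + (x t) ^ 2) := by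
      rw [Real.dist_eq, sub_zero, ← Real.sqrt_sq_eq_abs]
      exact Real.sqrt_le_sqrt (by nlinarith [sq_nonneg (y t)])
    exact max_le hy hx
  constructor
  · intro y x hfm
    obtain ⟨M, hM⟩ := aux_main_est β γ ε lam hβ hγ hε hεbound hlam
      ((y 0) ^ 2 + (x 0) ^ 2) (by positivity)
    constructor
    · rw [Metric.tendsto_atTop]
      intro ε' hε'
      obtain ⟨T, hT0, hT⟩ := hM (ε' / 2) (by linarith)
      obtain ⟨-, hdec⟩ := hT y x hfm le_rfl
      refine ⟨T, fun t ht => ?_⟩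
      have h1 := hdec t ht
      have h2 := hdist y x t
      calc dist ((y t, x t) : ℝ × ℝ) ((0 : ℝ), (0 : ℝ))
          ≤ Real.sqrt ((y t) ^ 2 + (x t) ^ 2) := h2
        _ ≤ ε' / 2 := h1
        _ < ε' := by linarith
    · obtain ⟨T, hT0, hT⟩ := hM 1 one_pos
      exact ⟨M, fun t ht => (hT y x hfm le_rfl).1 t ht⟩
  · intro K hK hKsub
    obtain ⟨r, hr⟩ := isBounded_iff_forall_norm_le.1 hK.isBounded
    obtain ⟨M, hM⟩ := aux_main_est β γ ε lam hβ hγ hε hεbound hlam (2 * r ^ 2)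
      (by positivity)
    have hinit : ∀ y x : ℝ → ℝ, (y 0, x 0) ∈ K → (y 0) ^ 2 + (x 0) ^ 2 ≤ 2 * r ^ 2 := by
      intro y x hmem
      have h := hr _ hmem
      rw [Prod.norm_def] at h
      have h1 : |y 0| ≤ r := le_trans (le_max_left _ _) h
      have h2 : |x 0| ≤ r := le_trans (le_max_right _ _) h
      nlinarith [abs_nonneg (y 0), abs_nonneg (x 0), sq_abs (y 0), sq_abs (x 0)]
    constructor
    · obtain ⟨T, hT0, hT⟩ := hM 1 one_pos
      exact ⟨M, fun y x hfm hmem t ht => (hT y x hfm (hinit y x hmem)).1 t ht⟩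
    · intro δ hδ
      obtain ⟨T, hT0, hT⟩ := hM δ hδ
      exact ⟨T, fun y x hfm hmem t ht => (hT y x hfm (hinit y x hmem)).2 t ht⟩
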